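/- If H and the easy cycle E are both Clifford gates and the twirling set is the full Pauli group P_n, then the effective dressed-cycle error channel E = ⟨φ(E^{-1})φ(Q^{-1})φ(H^{-1})ν(H)ν(QER)φ(R^{-1})⟩_{Q,R ∈ P_n} equals the Pauli twirl [φ(E^{-1})φ(H^{-1})ν(H)⟨ν(ER')φ(R'^{-1})⟩_{R'∈P_n}]^{P_n}, and is therefore a Pauli stochastic channel Σ_P p(P) PρP†. -/

import Mathlib

open Matrix Finset

/-- n-qubit Paulis (mod phase), identified with `(Z₂)^{2n}` via `P = Xᵃ Zᵇ`. -/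
abbrev Pauli (n : ℕ) := (Fin n → ZMod 2) × (Fin n → ZMod 2)

/-- The standard symplectic form on `(Z₂)^{2n}`. -/
def symp {n : ℕ} (Q P : Pauli n) : ZMod 2 :=
  ∑ i, (Q.1 i * P.2 i + Q.2 i * P.1 i)

/-- The commutation character: `χ_Q(P) = 1` if `Q` and `P` commute, `-1` otherwise. -/
def chi {n : ℕ} (Q P : Pauli n) : ℤ := (-1) ^ (symp Q P).val

/-- The Pauli operator `Xᵃ Zᵇ` as a `2ⁿ × 2ⁿ` matrix (indexed by bit strings). -/
def PauliOp {n : ℕ} (P : Pauli n) :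
    Matrix (Fin n → ZMod 2) (Fin n → ZMod 2) ℂ :=
  fun s t => if s = t + P.1 then (-1 : ℂ) ^ (∑ i, P.2 i * t i).val else 0

noncomputable def sgn (x : ZMod 2) : ℂ := (-1) ^ x.val
lemma zmod_val2 : ((2 : ZMod 2)).val = 0 := by decide
lemma zmod_val1 : ((1 : ZMod 2)).val = 1 := by decide
lemma sgn_add (x y : ZMod 2) : sgn (x + y) = sgn x * sgn y := by
  have h : ∀ x y : ZMod 2, (x + y).val % 2 = (x.val + y.val) % 2 := by decide
  unfold sgn
  rw [← pow_add, neg_one_pow_eq_pow_mod_two, neg_one_pow_eq_pow_mod_two (n := x.val + y.val), h]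
lemma sgn_zero : sgn 0 = 1 := rfl
lemma sgn_one : sgn 1 = -1 := by norm_num [sgn, zmod_val1]
lemma sgn_mul_self (x : ZMod 2) : sgn x * sgn x = 1 := by
  rw [← sgn_add]
  have h : x + x = 0 := by fin_cases x <;> decide
  rw [h, sgn_zero]

lemma sgn_conj (x : ZMod 2) : (starRingEnd ℂ) (sgn x) = sgn x := by
  fin_cases x <;> simp [sgn, zmod_val1]

lemma sgn_star (x : ZMod 2) : star (sgn x) = sgn x := sgn_conj x

lemma PauliOp_apply {n : ℕ} (P : Pauli n) (s t : Fin n → ZMod 2) :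
    PauliOp P s t = if s = t + P.1 then sgn (∑ i, P.2 i * t i) else 0 := rfl

lemma PauliOp_mul {n : ℕ} (P Q : Pauli n) :
    PauliOp P * PauliOp Q = sgn (∑ i, P.2 i * Q.1 i) • PauliOp (P + Q) := by
  ext s t
  rw [Matrix.mul_apply, Finset.sum_eq_single (t + Q.1)]
  · simp only [PauliOp_apply, Matrix.smul_apply, smul_eq_mul, if_pos rfl, Prod.fst_add,
      Prod.snd_add]
    have hc : t + Q.1 + P.1 = t + (P.1 + Q.1) := by
      rw [add_assoc, add_comm Q.1 P.1]
    rw [hc]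
    by_cases h : s = t + (P.1 + Q.1)
    · rw [if_pos h, if_pos h]
      have h1 : (∑ i, P.2 i * (t + Q.1) i) = (∑ i, P.2 i * t i) + ∑ i, P.2 i * Q.1 i := by
        rw [← Finset.sum_add_distrib]
        exact Finset.sum_congr rfl fun i _ => by simp [Pi.add_apply, mul_add]
      have h2 : (∑ i, (P.2 + Q.2) i * t i) = (∑ i, P.2 i * t i) + ∑ i, Q.2 i * t i := by
        rw [← Finset.sum_add_distrib]
        exact Finset.sum_congr rfl fun i _ => by simp [Pi.add_apply, add_mul]
      rw [h1, h2, sgn_add, sgn_add, if_pos trivial]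
      ring
    · rw [if_neg h, if_neg h, zero_mul, mul_zero]
  · intro u _ hu
    rw [PauliOp_apply Q, if_neg hu, mul_zero]
  · intro h; exact absurd (Finset.mem_univ _) h

lemma PauliOp_zero {n : ℕ} : PauliOp (0 : Pauli n) = 1 := by
  ext s t
  simp [PauliOp_apply, sgn_zero, Matrix.one_apply, eq_comm]

lemma PauliOp_conjTranspose {n : ℕ} (P : Pauli n) :
    (PauliOp P)ᴴ = sgn (∑ i, P.2 i * P.1 i) • PauliOp P := by
  ext s t
  simp only [Matrix.conjTranspose_apply, PauliOp_apply, Matrix.smul_apply, smul_eq_mul]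
  by_cases h : s = t + P.1
  · have hPP : P.1 + P.1 = 0 := by
      funext i; exact CharTwo.add_self_eq_zero _
    have h' : t = s + P.1 := by rw [h, add_assoc, hPP, add_zero]
    rw [if_pos h', if_pos h]
    have h1 : (∑ i, P.2 i * s i) = (∑ i, P.2 i * t i) + ∑ i, P.2 i * P.1 i := by
      rw [h, ← Finset.sum_add_distrib]
      exact Finset.sum_congr rfl fun i _ => by simp [Pi.add_apply, mul_add]
    rw [h1, sgn_add, StarMul.star_mul, sgn_star, sgn_star]
  · have h' : ¬ t = s + P.1 := by
      intro h'
      apply h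
      rw [h', add_assoc]
      funext i
      simp [CharTwo.add_self_eq_zero]
    rw [if_neg h', if_neg h, star_zero, mul_zero]

lemma card_bits (n : ℕ) : (Fintype.card (Fin n → ZMod 2) : ℂ) = 2 ^ n := by
  simp [Fintype.card_fun]

lemma sum_sgn_dot {n : ℕ} (c : Fin n → ZMod 2) :
    ∑ t : Fin n → ZMod 2, sgn (∑ i, t i * c i) = if c = 0 then (2:ℂ)^n else 0 := by
  by_cases hc : c = 0
  · subst hc
    simp [sgn_zero, card_bits]
  · rw [if_neg hc]
    obtain ⟨j, hj⟩ : ∃ j, c j ≠ 0 := by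
      by_contra hall
      push_neg at hall
      exact hc (funext fun j => hall j)
    have h01 : ∀ x : ZMod 2, x = 0 ∨ x = 1 := by decide
    have hj1 : c j = 1 := (h01 (c j)).resolve_left hj
    set e : Fin n → ZMod 2 := Pi.single j 1 with he
    have key : ∀ t : Fin n → ZMod 2,
        sgn (∑ i, (e + t) i * c i) = - sgn (∑ i, t i * c i) := by
      intro t
      have h1 : (∑ i, (e + t) i * c i) = (∑ i, e i * c i) + ∑ i, t i * c i := by
        rw [← Finset.sum_add_distrib]
        exact Finset.sum_congr rfl fun i _ => by simp [Pi.add_apply, add_mul]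
      have h2 : (∑ i, e i * c i) = 1 := by
        rw [Finset.sum_eq_single j]
        · rw [he]; simp [hj1]
        · intro i _ hi
          rw [he]; simp [Pi.single_apply, hi]
        · intro h; exact absurd (Finset.mem_univ _) h
      rw [h1, h2, sgn_add, sgn_one]
      ring
    have hre : ∑ t : Fin n → ZMod 2, sgn (∑ i, (e + t) i * c i)
        = ∑ t : Fin n → ZMod 2, sgn (∑ i, t i * c i) :=
      Fintype.sum_equiv (Equiv.addLeft e)
        (fun t => sgn (∑ i, (e + t) i * c i)) (fun t => sgn (∑ i, t i * c i))
        (fun t => rfl)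
    have : ∑ t : Fin n → ZMod 2, sgn (∑ i, t i * c i)
        = - ∑ t : Fin n → ZMod 2, sgn (∑ i, t i * c i) := by
      conv_lhs => rw [← hre]
      rw [← Finset.sum_neg_distrib]
      exact Finset.sum_congr rfl fun t _ => key t
    have h2 := add_eq_zero_iff_eq_neg.mpr this
    have : (2:ℂ) * ∑ t : Fin n → ZMod 2, sgn (∑ i, t i * c i) = 0 := by
      rw [two_mul]; exact h2
    simpa using this

lemma symp_eq {n : ℕ} (P Q : Pauli n) :
    symp P Q = (∑ i, P.1 i * Q.2 i) + ∑ i, P.2 i * Q.1 i := by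
  rw [symp, Finset.sum_add_distrib]

lemma pow4 (n : ℕ) : ((4:ℂ))^n = 2^n * 2^n := by rw [← mul_pow]; norm_num

lemma sum_sgn_symp {n : ℕ} (Q : Pauli n) :
    ∑ P : Pauli n, sgn (symp P Q) = if Q = 0 then (4:ℂ)^n else 0 := by
  rw [Fintype.sum_prod_type]
  have h : (∑ a : Fin n → ZMod 2, ∑ b : Fin n → ZMod 2, sgn (symp (a,b) Q))
      = (∑ a : Fin n → ZMod 2, sgn (∑ i, a i * Q.2 i)) *
        (∑ b : Fin n → ZMod 2, sgn (∑ i, b i * Q.1 i)) := by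
    rw [Finset.sum_mul_sum]
    exact Finset.sum_congr rfl fun a _ => Finset.sum_congr rfl fun b _ => by
      rw [symp_eq]; exact sgn_add _ _
  rw [h, sum_sgn_dot, sum_sgn_dot]
  by_cases h2 : Q.2 = 0 <;> by_cases h1 : Q.1 = 0
  · have : Q = 0 := Prod.ext h1 h2
    simp [this, h1, h2, pow4]
  · have : ¬ Q = 0 := fun h => h1 (by rw [h]; rfl)
    simp [this, h1, h2]
  · have : ¬ Q = 0 := fun h => h2 (by rw [h]; rfl)
    simp [this, h1, h2]
  · have : ¬ Q = 0 := fun h => h2 (by rw [h]; rfl)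
    simp [this, h1, h2]

lemma trace_PauliOp {n : ℕ} (R : Pauli n) :
    Matrix.trace (PauliOp R) = if R = 0 then (2:ℂ)^n else 0 := by
  rw [Matrix.trace]
  by_cases h1 : R.1 = 0
  · have hdiag : ∀ s, Matrix.diag (PauliOp R) s = sgn (∑ i, s i * R.2 i) := by
      intro s
      rw [Matrix.diag_apply, PauliOp_apply, h1, add_zero, if_pos rfl]
      exact congrArg sgn (Finset.sum_congr rfl fun i _ => mul_comm _ _)
    rw [Finset.sum_congr rfl fun s _ => hdiag s, sum_sgn_dot]
    by_cases h2 : R.2 = 0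
    · have : R = 0 := Prod.ext h1 h2
      simp [this, h2]
    · have : ¬ R = 0 := fun h => h2 (by rw [h]; rfl)
      simp [this, h2]
  · have : ¬ R = 0 := fun h => h1 (by rw [h]; rfl)
    rw [if_neg this]
    apply Finset.sum_eq_zero
    intro s _
    rw [Matrix.diag_apply, PauliOp_apply, if_neg, ]
    intro hs
    exact h1 ((left_eq_add).mp hs)

lemma z2_eq_add_iff : ∀ x y a : ZMod 2, x = y + a ↔ a = x + y := by decide
lemma z2_add_eq_zero_iff : ∀ x y : ZMod 2, x + y = 0 ↔ x = y := by decide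

lemma vec_eq_add_iff {n : ℕ} (x y a : Fin n → ZMod 2) : x = y + a ↔ a = x + y := by
  rw [funext_iff, funext_iff]
  exact forall_congr' fun i => by simp only [Pi.add_apply]; exact z2_eq_add_iff _ _ _

lemma vec_add_eq_zero_iff {n : ℕ} (x y : Fin n → ZMod 2) : x + y = 0 ↔ x = y := by
  rw [funext_iff, funext_iff]
  exact forall_congr' fun i => by
    simp only [Pi.add_apply, Pi.zero_apply]; exact z2_add_eq_zero_iff _ _

lemma vec_add_self {n : ℕ} (x : Fin n → ZMod 2) : x + x = 0 :=
  (vec_add_eq_zero_iff x x).mpr rfl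

lemma pauli_add_self {n : ℕ} (P : Pauli n) : P + P = 0 :=
  Prod.ext (vec_add_self _) (vec_add_self _)

lemma pauli_add_eq_zero_iff {n : ℕ} (P Q : Pauli n) : P + Q = 0 ↔ P = Q := by
  constructor
  · intro h
    exact Prod.ext ((vec_add_eq_zero_iff _ _).mp (congrArg Prod.fst h))
      ((vec_add_eq_zero_iff _ _).mp (congrArg Prod.snd h))
  · intro h; rw [h]; exact pauli_add_self Q

lemma PauliOp_mul_self {n : ℕ} (P : Pauli n) :
    PauliOp P * PauliOp P = sgn (∑ i, P.2 i * P.1 i) • 1 := by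
  rw [PauliOp_mul, pauli_add_self, PauliOp_zero]

lemma PauliOp_H_mul {n : ℕ} (P : Pauli n) : (PauliOp P)ᴴ * PauliOp P = 1 := by
  rw [PauliOp_conjTranspose, smul_mul_assoc, PauliOp_mul_self, smul_smul,
    sgn_mul_self, one_smul]

lemma PauliOp_mul_H {n : ℕ} (P : Pauli n) : PauliOp P * (PauliOp P)ᴴ = 1 := by
  rw [PauliOp_conjTranspose, mul_smul_comm, PauliOp_mul_self, smul_smul,
    sgn_mul_self, one_smul]

lemma conj_PauliOp {n : ℕ} (P Q : Pauli n) :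
    (PauliOp P)ᴴ * PauliOp Q * PauliOp P = sgn (symp P Q) • PauliOp Q := by
  have h2 : (2 : ZMod 2) = 0 := rfl
  rw [PauliOp_conjTranspose, smul_mul_assoc, smul_mul_assoc, PauliOp_mul,
    smul_mul_assoc, smul_smul, PauliOp_mul, smul_smul]
  have hadd : P + Q + P = Q := by
    rw [add_comm P Q, add_assoc, pauli_add_self, add_zero]
  rw [hadd]
  congr 1
  rw [← sgn_add, ← sgn_add]
  congr 1
  rw [symp, ← Finset.sum_add_distrib, ← Finset.sum_add_distrib]
  refine Finset.sum_congr rfl fun i _ => ?_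
  simp only [Prod.fst_add, Prod.snd_add, Pi.add_apply]
  linear_combination (P.2 i * P.1 i) * h2

lemma conj_rho {n : ℕ} (P : Pauli n)
    (ρ : Matrix (Fin n → ZMod 2) (Fin n → ZMod 2) ℂ) :
    (PauliOp P)ᴴ * ρ * PauliOp P = PauliOp P * ρ * (PauliOp P)ᴴ := by
  rw [PauliOp_conjTranspose]
  rw [smul_mul_assoc, smul_mul_assoc, mul_smul_comm]

lemma sandwich_add {n : ℕ} (P R : Pauli n)
    (ρ : Matrix (Fin n → ZMod 2) (Fin n → ZMod 2) ℂ) :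
    (PauliOp (P + R))ᴴ * ρ * PauliOp (P + R)
      = (PauliOp R)ᴴ * (PauliOp P * ρ * (PauliOp P)ᴴ) * PauliOp R := by
  have hm : PauliOp (P + R) = sgn (∑ i, P.2 i * R.1 i) • (PauliOp P * PauliOp R) := by
    rw [PauliOp_mul, smul_smul, sgn_mul_self, one_smul]
  rw [hm, Matrix.conjTranspose_smul, smul_mul_assoc, smul_mul_assoc, mul_smul_comm,
    smul_smul, sgn_star, sgn_mul_self, one_smul]
  calc (PauliOp P * PauliOp R)ᴴ * ρ * (PauliOp P * PauliOp R)
      = (PauliOp R)ᴴ * ((PauliOp P)ᴴ * ρ * PauliOp P) * PauliOp R := by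
        rw [Matrix.conjTranspose_mul]
        simp only [Matrix.mul_assoc]
    _ = (PauliOp R)ᴴ * (PauliOp P * ρ * (PauliOp P)ᴴ) * PauliOp R := by rw [conj_rho P ρ]

noncomputable def pCoeff {n : ℕ}
    (A : Matrix (Fin n → ZMod 2) (Fin n → ZMod 2) ℂ) (Q : Pauli n) : ℂ :=
  ((2:ℂ)^n)⁻¹ * ∑ s, ∑ t, PauliOp Q s t * A s t

lemma sgn_dot_mul_sgn_dot {n : ℕ} (t v : Fin n → ZMod 2) :
    ∑ b : Fin n → ZMod 2, sgn (∑ i, b i * t i) * sgn (∑ i, b i * v i)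
      = if t = v then (2:ℂ)^n else 0 := by
  have h : ∀ b : Fin n → ZMod 2,
      sgn (∑ i, b i * t i) * sgn (∑ i, b i * v i) = sgn (∑ i, b i * (t + v) i) := by
    intro b
    rw [← sgn_add, ← Finset.sum_add_distrib]
    exact congrArg sgn (Finset.sum_congr rfl fun i _ => by
      simp [Pi.add_apply, mul_add])
  rw [Finset.sum_congr rfl fun b _ => h b, sum_sgn_dot]
  by_cases htv : t = v
  · rw [if_pos ((vec_add_eq_zero_iff t v).mpr htv), if_pos htv]
  · rw [if_neg (fun hz => htv ((vec_add_eq_zero_iff t v).mp hz)), if_neg htv]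

lemma pauli_completeness {n : ℕ} (s t u v : Fin n → ZMod 2) :
    ∑ Q : Pauli n, PauliOp Q s t * PauliOp Q u v
      = if s = u ∧ t = v then (2:ℂ)^n else 0 := by
  rw [Fintype.sum_prod_type]
  have ha : ∀ a : Fin n → ZMod 2,
      (∑ b : Fin n → ZMod 2, PauliOp (a,b) s t * PauliOp (a,b) u v)
        = if s = t + a ∧ u = v + a then (if t = v then (2:ℂ)^n else 0) else 0 := by
    intro a
    by_cases h1 : s = t + a
    · by_cases h2 : u = v + a
      · rw [if_pos ⟨h1, h2⟩, ← sgn_dot_mul_sgn_dot t v]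
        exact Finset.sum_congr rfl fun b _ => by
          rw [PauliOp_apply, PauliOp_apply, if_pos h1, if_pos h2]
      · rw [if_neg (fun h => h2 h.2)]
        exact Finset.sum_eq_zero fun b _ => by
          rw [PauliOp_apply (a,b) u v, if_neg h2, mul_zero]
    · rw [if_neg (fun h => h1 h.1)]
      exact Finset.sum_eq_zero fun b _ => by
        rw [PauliOp_apply (a,b) s t, if_neg h1, zero_mul]
  rw [Finset.sum_congr rfl fun a _ => ha a]
  have hcond : ∀ a : Fin n → ZMod 2,
      (if s = t + a ∧ u = v + a then (if t = v then (2:ℂ)^n else 0) else 0)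
        = if a = s + t then (if u = v + (s + t) then (if t = v then (2:ℂ)^n else 0) else 0)
          else 0 := by
    intro a
    by_cases h : a = s + t
    · subst h
      have h1 : s = t + (s + t) := by
        rw [add_comm s t, ← add_assoc, vec_add_self, zero_add]
      by_cases h2 : u = v + (s + t)
      · rw [if_pos ⟨h1, h2⟩, if_pos rfl, if_pos h2]
      · rw [if_neg (fun hh => h2 hh.2), if_pos rfl, if_neg h2]
    · rw [if_neg, if_neg h]
      intro hh
      exact h ((vec_eq_add_iff s t a).mp hh.1)
  rw [Finset.sum_congr rfl fun a _ => hcond a, Finset.sum_ite_eq' Finset.univ (s + t)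
    (fun _ => if u = v + (s + t) then (if t = v then (2:ℂ)^n else 0) else 0),
    if_pos (Finset.mem_univ _)]
  have key : u = v + (s + t) ∧ t = v ↔ s = u ∧ t = v := by
    constructor
    · rintro ⟨h1, h2⟩
      refine ⟨?_, h2⟩
      subst h2
      have hv : t + (s + t) = s := by
        rw [add_comm s t, ← add_assoc, vec_add_self, zero_add]
      rw [h1, hv]
    · rintro ⟨h1, h2⟩
      subst h1; subst h2
      refine ⟨?_, rfl⟩
      have hv : t + (s + t) = s := by
        rw [add_comm s t, ← add_assoc, vec_add_self, zero_add]
      rw [hv]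
  by_cases hc : s = u ∧ t = v
  · rw [if_pos hc, if_pos (key.mpr hc).1, if_pos hc.2]
  · rw [if_neg hc]
    by_cases h1 : u = v + (s + t)
    · rw [if_pos h1, if_neg (fun h2 => hc (key.mp ⟨h1, h2⟩))]
    · rw [if_neg h1]

lemma pauli_expand {n : ℕ} (A : Matrix (Fin n → ZMod 2) (Fin n → ZMod 2) ℂ) :
    A = ∑ Q : Pauli n, pCoeff A Q • PauliOp Q := by
  have h2n : ((2:ℂ)^n) ≠ 0 := pow_ne_zero _ two_ne_zero
  ext u v
  rw [Matrix.sum_apply]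
  simp only [Matrix.smul_apply, smul_eq_mul, pCoeff]
  have : ∀ Q : Pauli n,
      (((2:ℂ)^n)⁻¹ * ∑ s, ∑ t, PauliOp Q s t * A s t) * PauliOp Q u v
        = ((2:ℂ)^n)⁻¹ * ∑ s, ∑ t, A s t * (PauliOp Q s t * PauliOp Q u v) := by
    intro Q
    rw [mul_assoc, Finset.sum_mul]
    congr 1
    refine Finset.sum_congr rfl fun s _ => ?_
    rw [Finset.sum_mul]
    exact Finset.sum_congr rfl fun t _ => by ring
  rw [Finset.sum_congr rfl fun Q _ => this Q, ← Finset.mul_sum]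
  rw [Finset.sum_comm]
  have hs : ∀ s, (∑ Q : Pauli n, ∑ t, A s t * (PauliOp Q s t * PauliOp Q u v))
      = ∑ t, A s t * (if s = u ∧ t = v then (2:ℂ)^n else 0) := by
    intro s
    rw [Finset.sum_comm]
    refine Finset.sum_congr rfl fun t _ => ?_
    rw [← Finset.mul_sum, pauli_completeness]
  rw [Finset.sum_congr rfl fun s _ => hs s]
  have : (∑ s, ∑ t, A s t * (if s = u ∧ t = v then (2:ℂ)^n else 0)) = A u v * (2:ℂ)^n := by
    rw [Finset.sum_eq_single u]
    · rw [Finset.sum_eq_single v]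
      · rw [if_pos ⟨rfl, rfl⟩]
      · intro t _ ht; rw [if_neg (fun h => ht h.2), mul_zero]
      · intro h; exact absurd (Finset.mem_univ _) h
    · intro s _ hs'
      exact Finset.sum_eq_zero fun t _ => by rw [if_neg (fun h => hs' h.1), mul_zero]
    · intro h; exact absurd (Finset.mem_univ _) h
  rw [this, mul_comm (A u v), ← mul_assoc, inv_mul_cancel₀ h2n, one_mul]

lemma symp_add_right {n : ℕ} (P Q R : Pauli n) :
    symp P (Q + R) = symp P Q + symp P R := by
  simp only [symp, Prod.fst_add, Prod.snd_add, Pi.add_apply, ← Finset.sum_add_distrib]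
  exact Finset.sum_congr rfl fun i _ => by ring

lemma char_orth {n : ℕ} (Q Q' : Pauli n) :
    ∑ P : Pauli n, sgn (symp P Q) * sgn (symp P Q') = if Q = Q' then (4:ℂ)^n else 0 := by
  have h : ∀ P : Pauli n, sgn (symp P Q) * sgn (symp P Q') = sgn (symp P (Q + Q')) :=
    fun P => by rw [symp_add_right, sgn_add]
  rw [Finset.sum_congr rfl fun P _ => h P, sum_sgn_symp]
  by_cases hq : Q = Q'
  · rw [if_pos ((pauli_add_eq_zero_iff Q Q').mpr hq), if_pos hq]
  · rw [if_neg (fun hz => hq ((pauli_add_eq_zero_iff Q Q').mp hz)), if_neg hq]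

lemma trace_PauliOpH_mul {n : ℕ} (Q Q' : Pauli n) :
    Matrix.trace ((PauliOp Q)ᴴ * PauliOp Q') = if Q = Q' then (2:ℂ)^n else 0 := by
  rw [PauliOp_conjTranspose, smul_mul_assoc, PauliOp_mul, smul_smul, Matrix.trace_smul,
    trace_PauliOp]
  by_cases hq : Q = Q'
  · subst hq
    rw [if_pos (pauli_add_self Q), if_pos rfl, smul_eq_mul, sgn_mul_self, one_mul]
  · rw [if_neg (fun hz => hq ((pauli_add_eq_zero_iff Q Q').mp hz)), if_neg hq,
      smul_zero]

lemma sandwich_assoc {n : ℕ} (U A B ρ : Matrix (Fin n → ZMod 2) (Fin n → ZMod 2) ℂ) :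
    Uᴴ * (A * (U * ρ * Uᴴ) * B) * U = (Uᴴ * A * U) * ρ * (Uᴴ * B * U) := by
  simp only [Matrix.mul_assoc]

lemma conj_expand {n : ℕ} (P : Pauli n) (A : Matrix (Fin n → ZMod 2) (Fin n → ZMod 2) ℂ) :
    (PauliOp P)ᴴ * A * PauliOp P
      = ∑ Q : Pauli n, (pCoeff A Q * sgn (symp P Q)) • PauliOp Q := by
  conv_lhs => rw [pauli_expand A]
  rw [Finset.mul_sum, Finset.sum_mul]
  refine Finset.sum_congr rfl fun Q _ => ?_
  rw [mul_smul_comm, smul_mul_assoc, conj_PauliOp, smul_smul]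

lemma expand_sandwich {n : ℕ} (d : Pauli n → ℂ)
    (ρ : Matrix (Fin n → ZMod 2) (Fin n → ZMod 2) ℂ) :
    (∑ Q : Pauli n, d Q • PauliOp Q) * ρ * (∑ Q : Pauli n, d Q • PauliOp Q)ᴴ
      = ∑ Q : Pauli n, ∑ Q' : Pauli n,
          (d Q * star (d Q')) • (PauliOp Q * ρ * (PauliOp Q')ᴴ) := by
  rw [Matrix.conjTranspose_sum, Finset.sum_mul, Finset.sum_mul]
  refine Finset.sum_congr rfl fun Q _ => ?_
  rw [smul_mul_assoc, Finset.mul_sum]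
  refine Finset.sum_congr rfl fun Q' _ => ?_
  rw [Matrix.conjTranspose_smul, mul_smul_comm, smul_mul_assoc, smul_smul,
    mul_comm (star (d Q')) (d Q)]

lemma trace_KHK {n : ℕ} (A : Matrix (Fin n → ZMod 2) (Fin n → ZMod 2) ℂ) :
    Matrix.trace (Aᴴ * A) = (2:ℂ)^n * ∑ Q : Pauli n, star (pCoeff A Q) * pCoeff A Q := by
  conv_lhs => rw [pauli_expand A]
  rw [Matrix.conjTranspose_sum, Finset.sum_mul, Matrix.trace_sum, Finset.mul_sum]
  refine Finset.sum_congr rfl fun Q _ => ?_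
  rw [Matrix.conjTranspose_smul, smul_mul_assoc, Finset.mul_sum, Matrix.trace_smul,
    Matrix.trace_sum]
  have h : ∀ Q' : Pauli n,
      Matrix.trace ((PauliOp Q)ᴴ * (pCoeff A Q' • PauliOp Q'))
        = pCoeff A Q' * (if Q = Q' then (2:ℂ)^n else 0) := by
    intro Q'
    rw [mul_smul_comm, Matrix.trace_smul, trace_PauliOpH_mul, smul_eq_mul]
  rw [Finset.sum_congr rfl fun Q' _ => h Q', Finset.sum_eq_single Q]
  · rw [if_pos rfl, smul_eq_mul]; ring
  · intro Q' _ hQ'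
    rw [if_neg (fun h => hQ' h.symm), mul_zero]
  · intro h; exact absurd (Finset.mem_univ _) h

lemma twirl_kraus {n m : ℕ}
    (K : Fin m → Matrix (Fin n → ZMod 2) (Fin n → ZMod 2) ℂ)
    (hK : ∑ k, (K k)ᴴ * K k = 1) :
    ∃ p : Pauli n → ℝ, (∀ P, 0 ≤ p P) ∧ (∑ P, p P = 1) ∧
      ∀ ρ : Matrix (Fin n → ZMod 2) (Fin n → ZMod 2) ℂ,
        ((4:ℂ)^n)⁻¹ • ∑ P : Pauli n,
            (PauliOp P)ᴴ * (∑ k, K k * (PauliOp P * ρ * (PauliOp P)ᴴ) * (K k)ᴴ) * PauliOp P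
          = ∑ Q : Pauli n, ((p Q : ℝ) : ℂ) •
              (PauliOp Q * ρ * (PauliOp Q)ᴴ) := by
  set c : Fin m → Pauli n → ℂ := fun k Q => pCoeff (K k) Q with hc
  have h2n : ((2:ℂ)^n) ≠ 0 := pow_ne_zero _ two_ne_zero
  have h4n : ((4:ℂ)^n) ≠ 0 := pow_ne_zero _ (by norm_num)
  refine ⟨fun Q => ∑ k, Complex.normSq (c k Q), ?_, ?_, ?_⟩
  · intro Q
    exact Finset.sum_nonneg fun k _ => Complex.normSq_nonneg _
  · -- trace normalization
    have htr : (∑ k, Matrix.trace ((K k)ᴴ * K k)) = (2:ℂ)^n := by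
      rw [← Matrix.trace_sum, hK, Matrix.trace_one, card_bits]
    have hsum1 : (∑ k, ∑ Q : Pauli n, star (c k Q) * c k Q) = 1 := by
      apply mul_left_cancel₀ h2n
      rw [mul_one, Finset.mul_sum]
      calc ∑ k, (2:ℂ)^n * ∑ Q : Pauli n, star (c k Q) * c k Q
          = ∑ k, Matrix.trace ((K k)ᴴ * K k) :=
            Finset.sum_congr rfl fun k _ => (trace_KHK (K k)).symm
        _ = (2:ℂ)^n := htr
    have : ((∑ Q : Pauli n, ∑ k, Complex.normSq (c k Q) : ℝ) : ℂ) = ((1:ℝ) : ℂ) := by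
      push_cast
      rw [Finset.sum_comm, ← hsum1]
      refine Finset.sum_congr rfl fun k _ => Finset.sum_congr rfl fun Q _ => ?_
      rw [← Complex.mul_conj (c k Q), RCLike.star_def, mul_comm]
    exact_mod_cast this
  · intro ρ
    set F : Pauli n → Pauli n → Matrix (Fin n → ZMod 2) (Fin n → ZMod 2) ℂ :=
      fun Q Q' => PauliOp Q * ρ * (PauliOp Q')ᴴ with hF
    have step1 : ∀ P : Pauli n, ∀ k,
        (PauliOp P)ᴴ * (K k * (PauliOp P * ρ * (PauliOp P)ᴴ) * (K k)ᴴ) * PauliOp P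
          = ∑ Q : Pauli n, ∑ Q' : Pauli n,
              ((c k Q * sgn (symp P Q)) * star (c k Q' * sgn (symp P Q'))) • F Q Q' := by
      intro P k
      rw [sandwich_assoc]
      have hH : (PauliOp P)ᴴ * (K k)ᴴ * PauliOp P = ((PauliOp P)ᴴ * K k * PauliOp P)ᴴ := by
        simp [Matrix.conjTranspose_mul, Matrix.mul_assoc]
      rw [hH, conj_expand, expand_sandwich]
    have step2 : ∀ k,
        (∑ P : Pauli n, ∑ Q : Pauli n, ∑ Q' : Pauli n,
            ((c k Q * sgn (symp P Q)) * star (c k Q' * sgn (symp P Q'))) • F Q Q')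
          = ∑ Q : Pauli n, ((4:ℂ)^n * (c k Q * star (c k Q))) • F Q Q := by
      intro k
      rw [Finset.sum_comm]
      refine Finset.sum_congr rfl fun Q _ => ?_
      rw [Finset.sum_comm]
      have inner : ∀ Q' : Pauli n,
          (∑ P : Pauli n, ((c k Q * sgn (symp P Q)) * star (c k Q' * sgn (symp P Q'))) • F Q Q')
            = ((c k Q * star (c k Q')) * (if Q = Q' then (4:ℂ)^n else 0)) • F Q Q' := by
        intro Q'
        rw [← Finset.sum_smul]
        congr 1
        rw [← char_orth Q Q', Finset.mul_sum]
        refine Finset.sum_congr rfl fun P _ => ?_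
        rw [star_mul', sgn_star]
        ring
      rw [Finset.sum_congr rfl fun Q' _ => inner Q', Finset.sum_eq_single Q]
      · rw [if_pos rfl]
        congr 1
        ring
      · intro Q' _ hQ'
        rw [if_neg (fun h => hQ' h.symm), mul_zero, zero_smul]
      · intro h; exact absurd (Finset.mem_univ _) h
    calc ((4:ℂ)^n)⁻¹ • ∑ P : Pauli n,
            (PauliOp P)ᴴ * (∑ k, K k * (PauliOp P * ρ * (PauliOp P)ᴴ) * (K k)ᴴ) * PauliOp P
        = ((4:ℂ)^n)⁻¹ • ∑ P : Pauli n, ∑ k,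
            (PauliOp P)ᴴ * (K k * (PauliOp P * ρ * (PauliOp P)ᴴ) * (K k)ᴴ) * PauliOp P := by
          congr 1
          exact Finset.sum_congr rfl fun P _ => by rw [Finset.mul_sum, Finset.sum_mul]
      _ = ((4:ℂ)^n)⁻¹ • ∑ k, ∑ P : Pauli n, ∑ Q : Pauli n, ∑ Q' : Pauli n,
            ((c k Q * sgn (symp P Q)) * star (c k Q' * sgn (symp P Q'))) • F Q Q' := by
          rw [Finset.sum_comm]
          congr 1
          exact Finset.sum_congr rfl fun k _ => Finset.sum_congr rfl fun P _ => step1 P k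
      _ = ((4:ℂ)^n)⁻¹ • ∑ k, ∑ Q : Pauli n, ((4:ℂ)^n * (c k Q * star (c k Q))) • F Q Q := by
          congr 1
          exact Finset.sum_congr rfl fun k _ => step2 k
      _ = ∑ Q : Pauli n, ((∑ k, Complex.normSq (c k Q) : ℝ) : ℂ) • F Q Q := by
          rw [Finset.sum_comm, Finset.smul_sum]
          refine Finset.sum_congr rfl fun Q _ => ?_
          rw [← Finset.sum_smul, smul_smul, ← Finset.mul_sum, ← mul_assoc,
            inv_mul_cancel₀ h4n, one_mul]
          congr 1
          push_cast
          exact Finset.sum_congr rfl fun k _ => by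
            rw [← Complex.mul_conj (c k Q), RCLike.star_def]

lemma pull_through {n : ℕ} {ι : Type*} (X Y : Matrix (Fin n → ZMod 2) (Fin n → ZMod 2) ℂ)
    (s : Finset ι) (f : ι → Matrix (Fin n → ZMod 2) (Fin n → ZMod 2) ℂ) (a : ℂ) :
    X * (a • ∑ i ∈ s, f i) * Y = a • ∑ i ∈ s, X * f i * Y := by
  rw [mul_smul_comm, smul_mul_assoc, Finset.mul_sum, Finset.sum_mul]

lemma clifford_conj {n : ℕ} (E : Matrix (Fin n → ZMod 2) (Fin n → ZMod 2) ℂ)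
    (hE1 : Eᴴ * E = 1) (Q P' : Pauli n) (c : ℂ)
    (hc : PauliOp Q * E = c • (E * PauliOp P'))
    (M : Matrix (Fin n → ZMod 2) (Fin n → ZMod 2) ℂ) :
    Eᴴ * ((PauliOp Q)ᴴ * M * PauliOp Q) * E
      = (PauliOp P')ᴴ * (Eᴴ * M * E) * PauliOp P' := by
  have h1 : (PauliOp Q * E)ᴴ * (PauliOp Q * E) = 1 := by
    rw [Matrix.conjTranspose_mul]
    calc Eᴴ * (PauliOp Q)ᴴ * (PauliOp Q * E)
        = Eᴴ * ((PauliOp Q)ᴴ * PauliOp Q) * E := by simp [Matrix.mul_assoc]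
      _ = 1 := by rw [PauliOp_H_mul, Matrix.mul_one, hE1]
  have hinner : (E * PauliOp P')ᴴ * (E * PauliOp P') = 1 := by
    rw [Matrix.conjTranspose_mul]
    calc (PauliOp P')ᴴ * Eᴴ * (E * PauliOp P')
        = (PauliOp P')ᴴ * (Eᴴ * E) * PauliOp P' := by simp [Matrix.mul_assoc]
      _ = 1 := by rw [hE1, Matrix.mul_one, PauliOp_H_mul]
  have h2 : (PauliOp Q * E)ᴴ * (PauliOp Q * E) = (star c * c) • 1 := by
    rw [hc, Matrix.conjTranspose_smul, smul_mul_assoc, mul_smul_comm, smul_smul, hinner]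
  have hcc : (star c * c) • (1 : Matrix (Fin n → ZMod 2) (Fin n → ZMod 2) ℂ) = 1 :=
    h2.symm.trans h1
  have hcc' : star c * c = 1 := by
    have h3 : ((star c * c) • (1 : Matrix (Fin n → ZMod 2) (Fin n → ZMod 2) ℂ))
        (fun _ => 0) (fun _ => 0)
        = (1 : Matrix (Fin n → ZMod 2) (Fin n → ZMod 2) ℂ) (fun _ => 0) (fun _ => 0) := by
      rw [hcc]
    rwa [Matrix.smul_apply, Matrix.one_apply_eq, smul_eq_mul, mul_one] at h3
  have hEQ : Eᴴ * (PauliOp Q)ᴴ = star c • ((PauliOp P')ᴴ * Eᴴ) := by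
    have h := congrArg Matrix.conjTranspose hc
    rw [Matrix.conjTranspose_mul, Matrix.conjTranspose_smul, Matrix.conjTranspose_mul] at h
    exact h
  calc Eᴴ * ((PauliOp Q)ᴴ * M * PauliOp Q) * E
      = (Eᴴ * (PauliOp Q)ᴴ) * M * (PauliOp Q * E) := by simp [Matrix.mul_assoc]
    _ = (star c • ((PauliOp P')ᴴ * Eᴴ)) * M * (c • (E * PauliOp P')) := by rw [hEQ, hc]
    _ = (star c * c) • ((PauliOp P')ᴴ * Eᴴ * M * (E * PauliOp P')) := by
        rw [smul_mul_assoc, smul_mul_assoc, mul_smul_comm, smul_smul]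
    _ = (PauliOp P')ᴴ * (Eᴴ * M * E) * PauliOp P' := by
        rw [hcc', one_smul]
        simp [Matrix.mul_assoc]

set_option maxHeartbeats 1600000 in
/-- if the hard cycle `H` and the easy cycle `E` are Clifford and
the twirling set is the full Pauli group, then the effective dressed-cycle error
channel `⟨φ(E⁻¹) φ(Q⁻¹) φ(H⁻¹) ν(H) ν(QER) φ(R⁻¹)⟩_{Q,R}` equals the Pauli twirl
`[φ(E⁻¹) φ(H⁻¹) ν(H) ⟨ν(ER') φ(R'⁻¹)⟩_{R'}]^{P_n}` and is therefore a Pauli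
stochastic channel `Σ_P p(P) P ρ P†`.  Here `ν(QER)` is encoded as
`nuE (eAct Q + R)`, where `eAct` is the symplectic action of conjugation by the
Clifford `E` (so that `Q·E·R = (phase)·E·(eAct Q)·R` has Pauli dressing label
`eAct Q + R`), the Kraus data `K` encodes CPTP-ness of the averaged map inside
the twirl. -/
theorem effective_error_clifford {n m : ℕ}
    (E H : Matrix (Fin n → ZMod 2) (Fin n → ZMod 2) ℂ)
    (nuH : Matrix (Fin n → ZMod 2) (Fin n → ZMod 2) ℂ →ₗ[ℂ]
      Matrix (Fin n → ZMod 2) (Fin n → ZMod 2) ℂ)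
    (nuE : Pauli n → (Matrix (Fin n → ZMod 2) (Fin n → ZMod 2) ℂ →ₗ[ℂ]
      Matrix (Fin n → ZMod 2) (Fin n → ZMod 2) ℂ))
    (hE : Eᴴ * E = 1 ∧ E * Eᴴ = 1) (hH : Hᴴ * H = 1 ∧ H * Hᴴ = 1)
    (eAct : Equiv.Perm (Pauli n))
    (heAct : ∀ Q : Pauli n, ∃ c : ℂ, PauliOp Q * E = c • (E * PauliOp (eAct Q)))
    (K : Fin m → Matrix (Fin n → ZMod 2) (Fin n → ZMod 2) ℂ)
    (hK : ∑ k, (K k)ᴴ * K k = 1)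
    (hKraus : ∀ ρ,
      Eᴴ * (Hᴴ * nuH (((4 : ℂ) ^ n)⁻¹ •
          ∑ R' : Pauli n, nuE R' ((PauliOp R')ᴴ * ρ * PauliOp R')) * H) * E
        = ∑ k, K k * ρ * (K k)ᴴ) :
    -- the effective error channel equals the Pauli twirl of the bracketed map:
    (∀ ρ : Matrix (Fin n → ZMod 2) (Fin n → ZMod 2) ℂ,
      ((16 : ℂ) ^ n)⁻¹ • ∑ Q : Pauli n, ∑ R : Pauli n,
          Eᴴ * ((PauliOp Q)ᴴ * (Hᴴ *
            nuH (nuE (eAct Q + R) ((PauliOp R)ᴴ * ρ * PauliOp R)) * H) * PauliOp Q) * E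
        = ((4 : ℂ) ^ n)⁻¹ • ∑ P : Pauli n,
            (PauliOp P)ᴴ *
              (Eᴴ * (Hᴴ * nuH (((4 : ℂ) ^ n)⁻¹ •
                  ∑ R' : Pauli n, nuE R'
                    ((PauliOp R')ᴴ * (PauliOp P * ρ * (PauliOp P)ᴴ) * PauliOp R')) * H) * E)
              * PauliOp P) ∧
    -- and is therefore a Pauli stochastic channel:
    (∃ p : Pauli n → ℝ, (∀ P, 0 ≤ p P) ∧ (∑ P, p P = 1) ∧
      ∀ ρ : Matrix (Fin n → ZMod 2) (Fin n → ZMod 2) ℂ,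
        ((16 : ℂ) ^ n)⁻¹ • ∑ Q : Pauli n, ∑ R : Pauli n,
            Eᴴ * ((PauliOp Q)ᴴ * (Hᴴ *
              nuH (nuE (eAct Q + R) ((PauliOp R)ᴴ * ρ * PauliOp R)) * H) * PauliOp Q) * E
          = ∑ P : Pauli n, (p P : ℂ) • (PauliOp P * ρ * (PauliOp P)ᴴ)) := by
  have main : ∀ ρ : Matrix (Fin n → ZMod 2) (Fin n → ZMod 2) ℂ,
      ((16 : ℂ) ^ n)⁻¹ • ∑ Q : Pauli n, ∑ R : Pauli n,
          Eᴴ * ((PauliOp Q)ᴴ * (Hᴴ *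
            nuH (nuE (eAct Q + R) ((PauliOp R)ᴴ * ρ * PauliOp R)) * H) * PauliOp Q) * E
        = ((4 : ℂ) ^ n)⁻¹ • ∑ P : Pauli n,
            (PauliOp P)ᴴ *
              (Eᴴ * (Hᴴ * nuH (((4 : ℂ) ^ n)⁻¹ •
                  ∑ R' : Pauli n, nuE R'
                    ((PauliOp R')ᴴ * (PauliOp P * ρ * (PauliOp P)ᴴ) * PauliOp R')) * H) * E)
              * PauliOp P := by
    intro ρ
    set G : Pauli n → Pauli n → Matrix (Fin n → ZMod 2) (Fin n → ZMod 2) ℂ := fun P R =>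
      (PauliOp P)ᴴ *
        (Eᴴ * (Hᴴ * nuH (nuE (P + R) ((PauliOp R)ᴴ * ρ * PauliOp R)) * H) * E) *
        PauliOp P with hG
    have stepA : ∀ Q R : Pauli n,
        Eᴴ * ((PauliOp Q)ᴴ * (Hᴴ *
            nuH (nuE (eAct Q + R) ((PauliOp R)ᴴ * ρ * PauliOp R)) * H) * PauliOp Q) * E
          = G (eAct Q) R := by
      intro Q R
      obtain ⟨c, hc⟩ := heAct Q
      exact clifford_conj E hE.1 Q (eAct Q) c hc _
    have stepC : ∀ P R' : Pauli n, G P (P + R')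
        = (PauliOp P)ᴴ *
            (Eᴴ * (Hᴴ * nuH (nuE R'
              ((PauliOp R')ᴴ * (PauliOp P * ρ * (PauliOp P)ᴴ) * PauliOp R')) * H) * E) *
            PauliOp P := by
      intro P R'
      simp only [hG]
      rw [show P + (P + R') = R' from by rw [← add_assoc, pauli_add_self, zero_add],
        sandwich_add]
    have hRside : ∀ P : Pauli n,
        (PauliOp P)ᴴ *
            (Eᴴ * (Hᴴ * nuH (((4 : ℂ) ^ n)⁻¹ •
                ∑ R' : Pauli n, nuE R'
                  ((PauliOp R')ᴴ * (PauliOp P * ρ * (PauliOp P)ᴴ) * PauliOp R')) * H) * E)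
            * PauliOp P
          = ((4 : ℂ) ^ n)⁻¹ • ∑ R' : Pauli n,
              (PauliOp P)ᴴ *
                (Eᴴ * (Hᴴ * nuH (nuE R'
                  ((PauliOp R')ᴴ * (PauliOp P * ρ * (PauliOp P)ᴴ) * PauliOp R')) * H) * E) *
                PauliOp P := by
      intro P
      rw [_root_.map_smul, map_sum, pull_through, pull_through, pull_through]
    calc ((16 : ℂ) ^ n)⁻¹ • ∑ Q : Pauli n, ∑ R : Pauli n,
            Eᴴ * ((PauliOp Q)ᴴ * (Hᴴ *
              nuH (nuE (eAct Q + R) ((PauliOp R)ᴴ * ρ * PauliOp R)) * H) * PauliOp Q) * E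
        = ((16 : ℂ) ^ n)⁻¹ • ∑ Q : Pauli n, ∑ R : Pauli n, G (eAct Q) R :=
          congrArg (fun X => ((16 : ℂ) ^ n)⁻¹ • X)
            (Finset.sum_congr rfl fun Q _ => Finset.sum_congr rfl fun R _ => stepA Q R)
      _ = ((16 : ℂ) ^ n)⁻¹ • ∑ P : Pauli n, ∑ R : Pauli n, G P R :=
          congrArg (fun X => ((16 : ℂ) ^ n)⁻¹ • X)
            (Fintype.sum_equiv eAct _ _ (fun Q => rfl))
      _ = ((16 : ℂ) ^ n)⁻¹ • ∑ P : Pauli n, ∑ R' : Pauli n, G P (P + R') :=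
          congrArg (fun X => ((16 : ℂ) ^ n)⁻¹ • X)
            (Finset.sum_congr rfl fun P _ =>
              (Fintype.sum_equiv (Equiv.addLeft P) (fun R' => G P (P + R'))
                (fun R => G P R) (fun R' => rfl)).symm)
      _ = ((16 : ℂ) ^ n)⁻¹ • ∑ P : Pauli n, ∑ R' : Pauli n,
            (PauliOp P)ᴴ *
              (Eᴴ * (Hᴴ * nuH (nuE R'
                ((PauliOp R')ᴴ * (PauliOp P * ρ * (PauliOp P)ᴴ) * PauliOp R')) * H) * E) *
              PauliOp P :=
          congrArg (fun X => ((16 : ℂ) ^ n)⁻¹ • X)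
            (Finset.sum_congr rfl fun P _ => Finset.sum_congr rfl fun R' _ => stepC P R')
      _ = ((4 : ℂ) ^ n)⁻¹ • ∑ P : Pauli n,
            (PauliOp P)ᴴ *
              (Eᴴ * (Hᴴ * nuH (((4 : ℂ) ^ n)⁻¹ •
                  ∑ R' : Pauli n, nuE R'
                    ((PauliOp R')ᴴ * (PauliOp P * ρ * (PauliOp P)ᴴ) * PauliOp R')) * H) * E)
              * PauliOp P := by
          rw [Finset.sum_congr rfl fun P _ => hRside P, ← Finset.smul_sum, smul_smul]
          have h16 : ((16 : ℂ) ^ n)⁻¹ = ((4 : ℂ) ^ n)⁻¹ * ((4 : ℂ) ^ n)⁻¹ := by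
            rw [← mul_inv, ← mul_pow]
            norm_num
          rw [h16]
  obtain ⟨p, hp0, hp1, hch⟩ := twirl_kraus K hK
  refine ⟨main, p, hp0, hp1, fun ρ => ?_⟩
  rw [main ρ]
  calc ((4 : ℂ) ^ n)⁻¹ • ∑ P : Pauli n,
        (PauliOp P)ᴴ *
          (Eᴴ * (Hᴴ * nuH (((4 : ℂ) ^ n)⁻¹ •
              ∑ R' : Pauli n, nuE R'
                ((PauliOp R')ᴴ * (PauliOp P * ρ * (PauliOp P)ᴴ) * PauliOp R')) * H) * E)
          * PauliOp P
      = ((4 : ℂ) ^ n)⁻¹ • ∑ P : Pauli n,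
          (PauliOp P)ᴴ *
            (∑ k, K k * (PauliOp P * ρ * (PauliOp P)ᴴ) * (K k)ᴴ) * PauliOp P := by
        exact congrArg (fun X => ((4 : ℂ) ^ n)⁻¹ • X)
          (Finset.sum_congr rfl fun P _ => by rw [hKraus])
    _ = ∑ P : Pauli n, (p P : ℂ) • (PauliOp P * ρ * (PauliOp P)ᴴ) := hch ρ
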